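/- Let r be a natural number and let S be an additive submonoid of ℤ × (Fin r → ℤ) all of whose elements have nonnegative first coordinate. Then the set Δ_ℚ(S) = { x ∈ (Fin r → ℚ) : ∃ n > 0, ∃ b, (n, b) ∈ S ∧ x = (1/n) • (fun i => (b i : ℚ)) } is a convex subset of the ℚ-vector space Fin r → ℚ (Convex ℚ Δ_ℚ(S)). -/

import Mathlib

private lemma num_cast_eq (a : ℚ) : (a.num : ℚ) = a * a.den := by
  nth_rewrite 2 [← Rat.num_div_den a]
  field_simp

/-- **`Δ_ℚ(S)` is convex.**

For an additive submonoid `S` of `ℤ × ℤ^r` all of whose elements have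
nonnegative first coordinate, the set
`Δ_ℚ(S) = { (1/n) • b : (n, b) ∈ S, n > 0 } ⊆ ℚ^r` is convex over `ℚ`. -/
theorem deltaQ_convex (r : ℕ) (S : AddSubmonoid (ℤ × (Fin r → ℤ)))
    (hS : ∀ s ∈ S, 0 ≤ s.1) :
    Convex ℚ {x : Fin r → ℚ | ∃ n : ℤ, 0 < n ∧ ∃ b : Fin r → ℤ,
      (n, b) ∈ S ∧ x = (1 / (n : ℚ)) • fun i => ((b i : ℚ))} := by
  rintro x ⟨n, hn, b, hbS, rfl⟩ y ⟨m, hm, c, hcS, rfl⟩ a t ha ht hat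
  set p : ℤ := a.num * t.den with hp
  set q : ℤ := t.num * a.den with hq
  have hp0 : 0 ≤ p := mul_nonneg (Rat.num_nonneg.2 ha) (by positivity)
  have hq0 : 0 ≤ q := mul_nonneg (Rat.num_nonneg.2 ht) (by positivity)
  have hpQ : (p : ℚ) = a * (a.den * t.den) := by
    rw [hp]; push_cast; rw [num_cast_eq]; ring
  have hqQ : (q : ℚ) = t * (a.den * t.den) := by
    rw [hq]; push_cast; rw [num_cast_eq]; ring
  have hpq : p + q = (a.den : ℤ) * t.den := by
    have : ((p + q : ℤ) : ℚ) = (((a.den : ℤ) * t.den : ℤ) : ℚ) := by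
      push_cast
      rw [hpQ, hqQ]
      linear_combination ((a.den : ℚ) * t.den) * hat
    exact_mod_cast this
  set n' : ℤ := p * m * n + q * n * m with hn'
  set b' : Fin r → ℤ := fun i => p * m * b i + q * n * c i with hb'
  have hmem : ((n', b') : ℤ × (Fin r → ℤ)) ∈ S := by
    have he : ((n', b') : ℤ × (Fin r → ℤ)) =
        ((p * m).toNat • ((n, b) : ℤ × (Fin r → ℤ))) +
        ((q * n).toNat • ((m, c) : ℤ × (Fin r → ℤ))) := by
      have h1 : ((p * m).toNat : ℤ) = p * m :=
        Int.toNat_of_nonneg (mul_nonneg hp0 hm.le)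
      have h2 : ((q * n).toNat : ℤ) = q * n :=
        Int.toNat_of_nonneg (mul_nonneg hq0 hn.le)
      refine Prod.ext ?_ ?_
      · simp [Prod.fst_add, nsmul_eq_mul, h1, h2, hn']
      · funext i
        simp [hb', nsmul_eq_mul, h1, h2, Pi.add_apply, Pi.smul_apply, smul_eq_mul]
    rw [he]
    exact S.add_mem (S.nsmul_mem hbS _) (S.nsmul_mem hcS _)
  have hn'pos : 0 < n' := by
    have : n' = (p + q) * (m * n) := by rw [hn']; ring
    rw [this, hpq]
    positivity
  refine ⟨n', hn'pos, b', hmem, ?_⟩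
  funext i
  have hnQ : (n : ℚ) ≠ 0 := by exact_mod_cast hn.ne'
  have hmQ : (m : ℚ) ≠ 0 := by exact_mod_cast hm.ne'
  have hn'Q : (n' : ℚ) ≠ 0 := by exact_mod_cast hn'pos.ne'
  have hn'e : (n' : ℚ) = p * m * n + q * n * m := by push_cast [hn']; ring
  have hb'e : ((b' i : ℤ) : ℚ) = p * m * b i + q * n * c i := by
    push_cast [hb']; ring
  simp only [Pi.add_apply, Pi.smul_apply, smul_eq_mul]
  rw [hb'e]
  field_simp
  rw [hn'e]
  have hN : (0:ℚ) < (a.den : ℚ) * t.den := by positivity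
  field_simp [hpQ, hqQ]
  linear_combination ((a.den : ℚ) * t.den * n * m * (a * (b i) * m + t * (c i) * n)) * hat + ((a.den : ℚ) * t.den * (a * (b i) * m + n * t * (c i)) * (1 - m * n)) * hat + (a * (b i) * m - (b i) * m + n * t * (c i)) * hpQ + (a * (b i) * m + n * t * (c i) - n * (c i)) * hqQ
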